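/- Let DT be a decision tree over ℝ^p, let x ∈ ℝ^p, and let N be a node on the decision path of x labeled by feature index j and threshold t. Suppose the child of N on the branch not taken by x is a leaf L whose region is nonempty. Then there exists z ∈ ℝ^p with z_k = x_k for every coordinate k ≠ j such that z is captured by L; in particular DT(z) equals the label of L. -/

import Mathlib

/-- A decision tree over `ℝ^p`: each internal node is labeled by a feature index and a
threshold, each leaf by a class (`true` = positive, `false` = negative). -/
inductive DTree (p : ℕ) : Type where
  | leaf (label : Bool) : DTree p
  | node (j : Fin p) (t : ℝ) (left right : DTree p) : DTree p

namespace DTree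

/-- Evaluation: at a node `(j, t)` go left if `x j ≤ t`, else right. -/
noncomputable def eval {p : ℕ} : DTree p → (Fin p → ℝ) → Bool
  | .leaf b, _ => b
  | .node j t l r, x => if x j ≤ t then l.eval x else r.eval x

/-- Subtree at a path from the root (`false` = left, `true` = right). -/
def subtreeAt {p : ℕ} : DTree p → List Bool → Option (DTree p)
  | T, [] => some T
  | .leaf _, _ :: _ => none
  | .node _ _ l r, d :: ds => if d then r.subtreeAt ds else l.subtreeAt ds

/-- `T.follows π x` means the evaluation of `x` from the root follows the path `π`. -/
def follows {p : ℕ} : DTree p → List Bool → (Fin p → ℝ) → Prop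
  | _, [], _ => True
  | .leaf _, _ :: _, _ => False
  | .node j t l r, d :: ds, x =>
      if d then ¬ x j ≤ t ∧ r.follows ds x else x j ≤ t ∧ l.follows ds x

/-- There is a leaf with label `b` at path `π`. -/
def IsLeafAt {p : ℕ} (T : DTree p) (π : List Bool) (b : Bool) : Prop :=
  T.subtreeAt π = some (.leaf b)

/-- Region of the node at path `π`: all points whose decision path passes through it. -/
def regionAt {p : ℕ} (T : DTree p) (π : List Bool) : Set (Fin p → ℝ) :=
  {x | T.follows π x}

end DTree

/-- `align x r S` replaces the coordinates of `x` indexed by `S` with those of `r`. -/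
def align {p : ℕ} (x r : Fin p → ℝ) (S : Finset (Fin p)) : Fin p → ℝ :=
  fun j => if j ∈ S then r j else x j

/-- Sparse Explanation Value (minus): minimum number of coordinates of the query `x`
that must be aligned to the reference `r` to obtain a negative prediction. -/
noncomputable def SEVminus {p : ℕ} (f : (Fin p → ℝ) → Bool) (x r : Fin p → ℝ) : ℕ :=
  sInf {k : ℕ | ∃ S : Finset (Fin p), f (align x r S) = false ∧ S.card = k}


lemma follows_mix {p : ℕ} :
    ∀ (T : DTree p) (π : List Bool) (x y z : Fin p → ℝ),
      T.follows π x → T.follows π y → (∀ k, z k = x k ∨ z k = y k) →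
      T.follows π z := by
  intro T π
  induction π generalizing T with
  | nil => intro x y z _ _ _; cases T <;> exact trivial
  | cons d ds ih =>
    intro x y z hx hy hz
    cases T with
    | leaf c => exact hx.elim
    | node j t l r =>
      simp only [DTree.follows] at hx hy ⊢
      cases d <;> simp only [if_true, if_false, Bool.false_eq_true] at hx hy ⊢
      · exact ⟨by rcases hz j with h | h <;> rw [h]; exacts [hx.1, hy.1],
          ih _ _ _ _ hx.2 hy.2 hz⟩
      · exact ⟨by rcases hz j with h | h <;> rw [h]; exacts [hx.1, hy.1],
          ih _ _ _ _ hx.2 hy.2 hz⟩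

lemma follows_append {p : ℕ} :
    ∀ (T : DTree p) (π π' : List Bool) (T' : DTree p),
      T.subtreeAt π = some T' → ∀ z : Fin p → ℝ,
      (T.follows (π ++ π') z ↔ T.follows π z ∧ T'.follows π' z) := by
  intro T π
  induction π generalizing T with
  | nil =>
    intro π' T' h z
    simp only [DTree.subtreeAt, Option.some.injEq] at h
    subst h
    simp [DTree.follows]
  | cons d ds ih =>
    intro π' T' h z
    cases T with
    | leaf c => simp [DTree.subtreeAt] at h
    | node j t l r =>
      simp only [DTree.subtreeAt] at h
      cases d <;>
        simp only [if_true, if_false, Bool.false_eq_true] at h <;>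
        simp only [List.cons_append, DTree.follows, if_true, if_false,
          Bool.false_eq_true] <;>
        rw [ih _ _ _ h] <;> tauto

lemma eval_of_follows {p : ℕ} :
    ∀ (T : DTree p) (π : List Bool) (T' : DTree p),
      T.subtreeAt π = some T' → ∀ z : Fin p → ℝ,
      T.follows π z → T.eval z = T'.eval z := by
  intro T π
  induction π generalizing T with
  | nil =>
    intro T' h z _
    simp only [DTree.subtreeAt, Option.some.injEq] at h; subst h; rfl
  | cons d ds ih =>
    intro T' h z hz
    cases T with
    | leaf c => exact hz.elim
    | node j t l r =>
      simp only [DTree.subtreeAt] at h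
      simp only [DTree.follows] at hz
      cases d <;> simp only [if_true, if_false, Bool.false_eq_true] at h hz <;>
        simp only [DTree.eval]
      · rw [if_pos hz.1]; exact ih _ _ h _ hz.2
      · rw [if_neg hz.1]; exact ih _ _ h _ hz.2

/-- If a node on the decision path of `x` splits on feature `j` and the
child on the branch not taken by `x` is a leaf `L` (labeled `b`) with nonempty region,
then some `z` agreeing with `x` off coordinate `j` is captured by `L`, and `DT(z) = b`. -/
theorem exists_one_coordinate_change_to_untaken_leaf
    {p : ℕ} (DT : DTree p) (x : Fin p → ℝ)
    (π : List Bool) (j : Fin p) (t : ℝ) (l r : DTree p) (b : Bool)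
    (hfol : DT.follows π x)
    (hnode : DT.subtreeAt π = some (.node j t l r))
    (hleaf : DT.IsLeafAt (π ++ [decide (x j ≤ t)]) b)
    (hne : (DT.regionAt (π ++ [decide (x j ≤ t)])).Nonempty) :
    ∃ z : Fin p → ℝ, (∀ k : Fin p, k ≠ j → z k = x k) ∧
      z ∈ DT.regionAt (π ++ [decide (x j ≤ t)]) ∧ DT.eval z = b := by
  obtain ⟨y, hy⟩ := hne
  have hy' : DT.follows (π ++ [decide (x j ≤ t)]) y := hy
  rw [follows_append DT π _ _ hnode] at hy'
  have hz : DT.follows (π ++ [decide (x j ≤ t)]) (Function.update x j (y j)) := by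
    rw [follows_append DT π _ _ hnode]
    constructor
    · refine follows_mix DT π x y _ hfol hy'.1 fun k => ?_
      by_cases hk : k = j
      · subst hk; simp
      · left; exact Function.update_of_ne hk _ _
    · have hyc := hy'.2
      have hj : Function.update x j (y j) j = y j := Function.update_self _ _ _
      cases hd : decide (x j ≤ t) <;> rw [hd] at hyc <;>
        simp only [DTree.follows, if_true, if_false, Bool.false_eq_true]
          at hyc ⊢ <;> rw [hj] <;> exact ⟨hyc.1, trivial⟩
  exact ⟨Function.update x j (y j), fun k hk => Function.update_of_ne hk _ _, hz,
    (eval_of_follows DT _ _ hleaf _ hz).trans rfl⟩
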